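/- arXiv:2504.02387 — 3 statements merged into one kernel-verified Lean document; each statement's English description precedes it below -/
import Mathlib

section
/- Let p be a prime and m ≥ 2. Let H = ℤ_{p²}^{m−1} × ℤ_p². If h₁,...,h_r are independently and uniformly random elements of H and w₁,...,w_r ∈ ℤ_{p²} are fixed coefficients, not all zero, then the probability that w₁h₁ + ⋯ + w_r h_r = 0 is at most 1/p^{m−1}. -/
lemma zmod_cancel (p : ℕ) [hp : Fact p.Prime] {c : ZMod (p ^ 2)} (hc : c ≠ 0)
    {a b : ℕ} (hb : b < a) (ha : a < p) (h : c * (a : ZMod (p ^ 2)) = c * (b : ZMod (p ^ 2))) : False := by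
  have hd : 0 < a - b := Nat.sub_pos_of_lt hb
  have hdp : a - b < p := lt_of_le_of_lt (Nat.sub_le a b) ha
  have hcop : Nat.Coprime (a - b) (p ^ 2) :=
    (((hp.out.coprime_iff_not_dvd).mpr (Nat.not_dvd_of_pos_of_lt hd hdp)).symm).pow_right 2
  have hu : IsUnit ((a - b : ℕ) : ZMod (p ^ 2)) := (ZMod.isUnit_iff_coprime _ _).mpr hcop
  have h0 : c * ((a - b : ℕ) : ZMod (p ^ 2)) = 0 := by
    rw [Nat.cast_sub hb.le, mul_sub, h, sub_self]
  exact hc ((hu.mul_left_eq_zero).mp h0)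

lemma zmod_inj (p : ℕ) [Fact p.Prime] {c : ZMod (p ^ 2)} (hc : c ≠ 0) :
    Function.Injective (fun a : ZMod p => c * ((a.val : ℕ) : ZMod (p ^ 2))) := by
  intro a b h
  by_contra hab
  have hv : a.val ≠ b.val := fun e => hab (ZMod.val_injective _ e)
  rcases hv.lt_or_gt with h1 | h1
  · exact zmod_cancel p hc h1 (ZMod.val_lt b) h.symm
  · exact zmod_cancel p hc h1 (ZMod.val_lt a) h

theorem stmt11 (p m : ℕ) [Fact p.Prime] (hm : 2 ≤ m) (r : ℕ)
    (w : Fin r → ZMod (p ^ 2)) (hw : w ≠ 0) :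
    ((Finset.univ.filter
        (fun h : Fin r → (Fin (m - 1) → ZMod (p ^ 2)) × (ZMod p × ZMod p) =>
          ∑ i, (w i).val • h i = 0)).card : ℝ) /
      (Fintype.card (Fin r → (Fin (m - 1) → ZMod (p ^ 2)) × (ZMod p × ZMod p)) : ℝ) ≤
    1 / (p : ℝ) ^ (m - 1) := by
  classical
  obtain ⟨j, hj0⟩ := Function.ne_iff.mp hw
  have hj : w j ≠ 0 := by simpa using hj0
  set H := (Fin (m - 1) → ZMod (p ^ 2)) × (ZMod p × ZMod p) with hH
  let Φ : (Fin r → H) →+ H := AddMonoidHom.mk' (fun h => ∑ i, (w i).val • h i) (by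
    intro a b
    simp [smul_add, Finset.sum_add_distrib])
  have hcw : (((w j).val : ℕ) : ZMod (p ^ 2)) = w j := ZMod.natCast_rightInverse (w j)
  have hc : (((w j).val : ℕ) : ZMod (p ^ 2)) ≠ 0 := by rw [hcw]; exact hj
  -- injection into range
  let g : (Fin (m - 1) → ZMod p) → (Fin r → H) := fun v =>
    Pi.single j ((fun k => (((v k).val : ℕ) : ZMod (p ^ 2))), 0)
  have hΦg : ∀ v, Φ (g v) = (w j).val • ((fun k => (((v k).val : ℕ) : ZMod (p ^ 2))), 0) := by
    intro v
    show ∑ i, (w i).val • (g v i) = _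
    rw [Fintype.sum_eq_single j]
    · simp only [g, Pi.single_eq_same]
    · intro i hi
      simp [g, Pi.single_eq_of_ne hi]
  have hginj : Function.Injective (fun v => (⟨Φ (g v), ⟨g v, rfl⟩⟩ : Φ.range)) := by
    intro v v' hvv
    have h1 : Φ (g v) = Φ (g v') := congrArg Subtype.val hvv
    rw [hΦg, hΦg] at h1
    have h2 := congrArg Prod.fst h1
    funext k
    have h3 := congrFun h2 k
    simp only [Prod.smul_fst, Pi.smul_apply, smul_eq_mul, nsmul_eq_mul] at h3
    exact zmod_inj p hc h3
  have hrange : (p : ℕ) ^ (m - 1) ≤ Nat.card Φ.range := by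
    have := Fintype.card_le_of_injective _ hginj
    simpa [ZMod.card] using this.trans_eq Nat.card_eq_fintype_card.symm
  -- kernel counting
  have hker : ((Finset.univ.filter
        (fun h : Fin r → H => ∑ i, (w i).val • h i = 0)).card : ℕ) = Nat.card Φ.ker := by
    have e : {x : Fin r → H // x ∈ Φ.ker} ≃ {x : Fin r → H // Φ x = 0} :=
      Equiv.subtypeEquivRight (fun x => AddMonoidHom.mem_ker)
    rw [Nat.card_congr e, Nat.card_eq_fintype_card, Fintype.card_subtype]
    congr 1
  have hcard : Nat.card (Fin r → H) = Nat.card Φ.range * Nat.card Φ.ker := by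
    rw [AddSubgroup.card_eq_card_quotient_mul_card_addSubgroup Φ.ker,
      Nat.card_congr (QuotientAddGroup.quotientKerEquivRange Φ).toEquiv]
  have hkpos : 0 < Nat.card Φ.ker := Nat.card_pos
  have hp0 : (0:ℝ) < (p:ℝ) := by exact_mod_cast (Fact.out : p.Prime).pos
  have hppos : (0:ℝ) < (p:ℝ) ^ (m - 1) := pow_pos hp0 _
  have hrpos : 0 < Nat.card Φ.range := Nat.card_pos
  rw [hker]
  have hD : (Fintype.card (Fin r → H) : ℝ) = (Nat.card Φ.range : ℝ) * (Nat.card Φ.ker : ℝ) := by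
    rw [← Nat.card_eq_fintype_card, hcard]; push_cast; ring
  rw [hD]
  rw [div_le_div_iff₀ (by positivity) hppos]
  have : (p:ℝ) ^ (m-1) ≤ (Nat.card Φ.range : ℝ) := by
    exact_mod_cast hrange
  calc (Nat.card Φ.ker : ℝ) * (p:ℝ) ^ (m-1) ≤ (Nat.card Φ.ker : ℝ) * (Nat.card Φ.range : ℝ) := by
        apply mul_le_mul_of_nonneg_left this (by positivity)
    _ = 1 * ((Nat.card Φ.range : ℝ) * (Nat.card Φ.ker : ℝ)) := by ring
end

section
/- Let t ≥ 1, let κ₁,...,κ_t ≥ 2 be integers, and let ℓ_{i,j} (for 2 ≤ i ≤ t, 1 ≤ j ≤ i−1) satisfy 0 ≤ ℓ_{i,j} ≤ κ_j − 1. Consider the commutative monoid Γ of monomials x₁^{j₁}⋯x_t^{j_t} with 0 ≤ j_i ≤ κ_i − 1, with multiplication given by adding exponents and reducing via the rewriting rules x₁^{κ₁} = 1 and x_i^{κ_i} = x₁^{ℓ_{i,1}}⋯x_{i−1}^{ℓ_{i,i−1}}. Then every element of Γ is invertible; in particular, x_i^{κ₁κ₂⋯κ_i} = 1 for each i, so Γ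 is an abelian group of order κ₁κ₂⋯κ_t. -/
open Finset

section Stmt16Aux

variable {t : ℕ}

/-- partial products of the κ's -/
private def vv (κ : Fin t → ℕ) (n : ℕ) : ℕ :=
  ∏ k ∈ Finset.univ.filter (fun k : Fin t => k.val < n), κ k

/-- right-hand side of the i-th relation -/
private noncomputable def rhs (ℓ : Fin t → Fin t → ℕ) (i : Fin t) : Fin t →₀ ℕ :=
  ∑ j ∈ Finset.univ.filter (· < i), Finsupp.single j (ℓ i j)

/-- weighted measure -/
private def mu (κ : Fin t → ℕ) (a : Fin t →₀ ℕ) : ℕ := ∑ j, a j * vv κ j.val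

private def toZf (a : Fin t →₀ ℕ) : Fin t → ℤ := fun j => (a j : ℤ)

private lemma vv_pos (κ : Fin t → ℕ) (hκ : ∀ i, 2 ≤ κ i) (n : ℕ) : 0 < vv κ n :=
  Finset.prod_pos fun i _ => by have := hκ i; omega

private lemma vv_succ (κ : Fin t → ℕ) {n : ℕ} (hn : n < t) :
    vv κ (n + 1) = vv κ n * κ ⟨n, hn⟩ := by
  unfold vv
  rw [show Finset.univ.filter (fun k : Fin t => k.val < n + 1)
      = insert ⟨n, hn⟩ (Finset.univ.filter (fun k : Fin t => k.val < n)) by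
    ext j; simp [Fin.ext_iff]; omega]
  rw [Finset.prod_insert (by simp)]
  ring

private lemma vv_dvd (κ : Fin t → ℕ) {m n : ℕ} (h : m ≤ n) : vv κ m ∣ vv κ n :=
  Finset.prod_dvd_prod_of_subset _ _ _ (by intro j; simp; omega)

private lemma mu_add (κ : Fin t → ℕ) (x y : Fin t →₀ ℕ) :
    mu κ (x + y) = mu κ x + mu κ y := by
  simp [mu, add_mul, Finset.sum_add_distrib]

private lemma mu_sum (κ : Fin t → ℕ) {α : Type*} (s : Finset α) (f : α → (Fin t →₀ ℕ)) :
    mu κ (∑ x ∈ s, f x) = ∑ x ∈ s, mu κ (f x) := by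
  classical
  induction s using Finset.induction_on with
  | empty => simp [mu]
  | insert _ _ hx ih => rw [Finset.sum_insert hx, Finset.sum_insert hx, mu_add, ih]

private lemma mu_single (κ : Fin t → ℕ) (i : Fin t) (m : ℕ) :
    mu κ (Finsupp.single i m) = m * vv κ i.val := by
  simp [mu, Finsupp.single_apply, ite_mul]

private lemma key_lt (κ : Fin t → ℕ) (hκ : ∀ i, 2 ≤ κ i) :
    ∀ n, (∑ j ∈ Finset.univ.filter (fun j : Fin t => j.val < n), (κ j - 1) * vv κ j.val)
      < vv κ n := by
  intro n
  induction n with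
  | zero => simp [vv]
  | succ n ih =>
    rcases Nat.lt_or_ge n t with hn | hn
    · rw [show Finset.univ.filter (fun j : Fin t => j.val < n + 1)
          = insert ⟨n, hn⟩ (Finset.univ.filter (fun j : Fin t => j.val < n)) by
        ext j; simp [Fin.ext_iff]; omega]
      rw [Finset.sum_insert (by simp), vv_succ κ hn]
      have h2 := hκ ⟨n, hn⟩
      have h3 := vv_pos κ hκ n
      have : (κ ⟨n, hn⟩ - 1) * vv κ n + (vv κ n) = κ ⟨n, hn⟩ * vv κ n := by
        rw [Nat.sub_mul, one_mul, Nat.sub_add_cancel (Nat.le_mul_of_pos_left _ (by omega))]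
      calc (κ ⟨n, hn⟩ - 1) * vv κ n
            + ∑ j ∈ Finset.univ.filter (fun j : Fin t => j.val < n), (κ j - 1) * vv κ j.val
          < (κ ⟨n, hn⟩ - 1) * vv κ n + vv κ n := by omega
        _ = κ ⟨n, hn⟩ * vv κ n := this
        _ = vv κ n * κ ⟨n, hn⟩ := by ring
    · have he1 : Finset.univ.filter (fun j : Fin t => j.val < n + 1)
          = Finset.univ.filter (fun j : Fin t => j.val < n) := by
        ext j; have := j.isLt
        simp only [Finset.mem_filter, Finset.mem_univ, true_and]
        omega
      have he2 : vv κ (n + 1) = vv κ n := by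
        unfold vv
        refine Finset.prod_congr ?_ fun _ _ => rfl
        ext j; have := j.isLt
        simp only [Finset.mem_filter, Finset.mem_univ, true_and]
        omega
      rw [he1, he2]; exact ih

private lemma rhs_apply (ℓ : Fin t → Fin t → ℕ) (i j : Fin t) :
    (rhs ℓ i) j = if j < i then ℓ i j else 0 := by
  classical
  rw [rhs, Finsupp.finset_sum_apply]
  simp only [Finsupp.single_apply]
  rw [Finset.sum_ite_eq' (Finset.univ.filter (· < i)) j (fun k => ℓ i k)]
  simp

end Stmt16Aux

theorem stmt16 (t : ℕ) (ht : 1 ≤ t) (κ : Fin t → ℕ) (hκ : ∀ i, 2 ≤ κ i)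
    (ℓ : Fin t → Fin t → ℕ) (hℓ : ∀ i j, j < i → ℓ i j ≤ κ j - 1) :
    ∀ c : AddCon (Fin t →₀ ℕ),
      c = addConGen (fun x y => ∃ i : Fin t,
        x = Finsupp.single i (κ i) ∧
        y = ∑ j ∈ Finset.univ.filter (· < i), Finsupp.single j (ℓ i j)) →
      (∀ x : c.Quotient, ∃ y : c.Quotient, x + y = 0) ∧
      (∀ i : Fin t,
        c.mk' ((∏ j ∈ Finset.univ.filter (· ≤ i), κ j) • Finsupp.single i 1) = 0) ∧
      Nat.card c.Quotient = ∏ i, κ i := by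
  intro c hc
  classical
  have mk_smul : ∀ (n : ℕ) (a : Fin t →₀ ℕ), c.mk' (n • a) = n • c.mk' a := fun n a => rfl
  have smul_zero' : ∀ n : ℕ, n • (0 : c.Quotient) = 0 := by
    intro n
    have h0 : (0 : c.Quotient) = c.mk' 0 := rfl
    rw [h0, ← mk_smul, smul_zero]
  -- the basic relations hold in c
  have base : ∀ i : Fin t, c.mk' (Finsupp.single i (κ i)) = c.mk' (rhs ℓ i) := by
    intro i
    refine c.eq.mpr ?_
    rw [hc]
    exact AddConGen.Rel.of _ _ ⟨i, rfl, rfl⟩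
  -- the order relations
  have ordkey : ∀ n : ℕ, ∀ i : Fin t, i.val < n →
      c.mk' (vv κ (i.val + 1) • Finsupp.single i 1) = 0 := by
    intro n
    induction n with
    | zero => intro i hi; omega
    | succ n IH =>
      intro i hi
      rcases Nat.lt_or_ge i.val n with h | h
      · exact IH i h
      have hin : i.val = n := by omega
      have hv : vv κ (i.val + 1) = vv κ i.val * κ i := by
        rw [vv_succ κ i.isLt]
      have h1 : vv κ (i.val + 1) • Finsupp.single i (1 : ℕ)
          = vv κ i.val • Finsupp.single i (κ i) := by
        rw [hv, mul_smul, Finsupp.smul_single, smul_eq_mul, mul_one]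
      rw [h1, mk_smul, base i, ← mk_smul]
      have h2 : vv κ i.val • rhs ℓ i
          = ∑ j ∈ Finset.univ.filter (· < i), Finsupp.single j (vv κ i.val * ℓ i j) := by
        rw [rhs, Finset.smul_sum]
        refine Finset.sum_congr rfl fun j _ => ?_
        rw [Finsupp.smul_single, smul_eq_mul]
      rw [h2, map_sum]
      refine Finset.sum_eq_zero fun j hj => ?_
      have hji : j < i := by simpa using hj
      have hji' : j.val < i.val := hji
      obtain ⟨k, hk⟩ : vv κ (j.val + 1) ∣ vv κ i.val := vv_dvd κ (by omega)
      have h3 : Finsupp.single j (vv κ i.val * ℓ i j)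
          = (k * ℓ i j) • (vv κ (j.val + 1) • Finsupp.single j (1 : ℕ)) := by
        rw [← mul_smul, Finsupp.smul_single, smul_eq_mul, mul_one, hk]
        congr 1
        ring
      rw [h3, mk_smul, IH j (by omega), smul_zero' _]
  have prodeq : ∀ i : Fin t,
      (∏ j ∈ Finset.univ.filter (· ≤ i), κ j) = vv κ (i.val + 1) := by
    intro i
    unfold vv
    refine Finset.prod_congr ?_ fun _ _ => rfl
    ext j
    simp only [Finset.mem_filter, Finset.mem_univ, true_and, Fin.le_def]
    omega
  have order : ∀ i : Fin t,
      c.mk' ((∏ j ∈ Finset.univ.filter (· ≤ i), κ j) • Finsupp.single i 1) = 0 := by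
    intro i
    rw [prodeq i]
    exact ordkey (i.val + 1) i (Nat.lt_succ_self _)
  -- N • anything = 0
  have orderN : ∀ a : Fin t →₀ ℕ, c.mk' (vv κ t • a) = 0 := by
    have single1 : ∀ i : Fin t, c.mk' (vv κ t • Finsupp.single i 1) = 0 := by
      intro i
      obtain ⟨k, hk⟩ : vv κ (i.val + 1) ∣ vv κ t := vv_dvd κ i.isLt
      rw [hk, mul_comm, mul_smul, mk_smul, ordkey (i.val + 1) i (Nat.lt_succ_self _),
        smul_zero' _]
    intro a
    induction a using Finsupp.induction with
    | zero => rw [smul_zero, map_zero]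
    | single_add i b f _ _ ih =>
      rw [smul_add, map_add, ih, add_zero]
      have hsb : vv κ t • Finsupp.single i b = b • (vv κ t • Finsupp.single i (1 : ℕ)) := by
        rw [Finsupp.smul_single, Finsupp.smul_single, Finsupp.smul_single]
        congr 1
        simp [mul_comm]
      rw [hsb, mk_smul, single1 i, smul_zero' _]
  -- reduction to normal forms
  have reduce : ∀ N : ℕ, ∀ a : Fin t →₀ ℕ, mu κ a ≤ N →
      ∃ b : Fin t →₀ ℕ, (∀ i, b i < κ i) ∧ c.mk' b = c.mk' a := by
    have step : ∀ a : Fin t →₀ ℕ, (¬ ∀ i, a i < κ i) →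
        ∃ a' : Fin t →₀ ℕ, mu κ a' < mu κ a ∧ c.mk' a' = c.mk' a := by
      intro a hred
      push_neg at hred
      obtain ⟨i, hi⟩ := hred
      have hi' : κ i ≤ a i := hi
      set b0 := a - Finsupp.single i (κ i) with hb0def
      have hb0 : b0 + Finsupp.single i (κ i) = a := by
        ext j
        simp only [hb0def, Finsupp.add_apply, Finsupp.tsub_apply, Finsupp.single_apply]
        split_ifs with hij
        · subst hij; omega
        · omega
      refine ⟨b0 + rhs ℓ i, ?_, ?_⟩
      · have hmu1 : mu κ a = mu κ b0 + κ i * vv κ i.val := by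
          rw [← hb0, mu_add, mu_single]
        have hmu2 : mu κ (rhs ℓ i) < κ i * vv κ i.val := by
          rw [rhs, mu_sum]
          have hb : (∑ j ∈ Finset.univ.filter (· < i), mu κ (Finsupp.single j (ℓ i j)))
              ≤ ∑ j ∈ Finset.univ.filter (fun j : Fin t => j.val < i.val),
                  (κ j - 1) * vv κ j.val := by
            rw [show Finset.univ.filter (fun j : Fin t => j.val < i.val)
                = Finset.univ.filter (· < i) by
              ext j
              simp only [Finset.mem_filter, Finset.mem_univ, true_and, Fin.lt_def]]
            refine Finset.sum_le_sum fun j hj => ?_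
            rw [mu_single]
            have hji : j < i := by simpa using hj
            exact Nat.mul_le_mul_right _ (hℓ i j hji)
          have hc2 := key_lt κ hκ i.val
          have hc3 : vv κ i.val ≤ κ i * vv κ i.val :=
            Nat.le_mul_of_pos_left _ (by have := hκ i; omega)
          omega
        rw [mu_add]
        omega
      · calc c.mk' (b0 + rhs ℓ i) = c.mk' b0 + c.mk' (rhs ℓ i) := map_add _ _ _
          _ = c.mk' b0 + c.mk' (Finsupp.single i (κ i)) := by rw [base i]
          _ = c.mk' (b0 + Finsupp.single i (κ i)) := (map_add _ _ _).symm
          _ = c.mk' a := by rw [hb0]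
    intro N
    induction N with
    | zero =>
      intro a ha
      by_cases hred : ∀ i, a i < κ i
      · exact ⟨a, hred, rfl⟩
      · obtain ⟨a', ha', _⟩ := step a hred
        omega
    | succ N IH =>
      intro a ha
      by_cases hred : ∀ i, a i < κ i
      · exact ⟨a, hred, rfl⟩
      · obtain ⟨a', ha', he⟩ := step a hred
        obtain ⟨b, hb1, hb2⟩ := IH a' (by omega)
        exact ⟨b, hb1, hb2.trans he⟩
  -- the ℤ-span side
  set Rz : Fin t → (Fin t → ℤ) := fun i => toZf (Finsupp.single i (κ i)) - toZf (rhs ℓ i)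
    with hRz
  set M : Submodule ℤ (Fin t → ℤ) := Submodule.span ℤ (Set.range Rz) with hM
  have toZf_add : ∀ x y : Fin t →₀ ℕ, toZf (x + y) = toZf x + toZf y := by
    intro x y; funext j; simp [toZf]
  have hcle : ∀ x y : Fin t →₀ ℕ, c x y → toZf x - toZf y ∈ M := by
    intro x y hxy
    rw [hc] at hxy
    clear hc
    have hxy' : AddConGen.Rel (fun x y => ∃ i : Fin t,
        x = Finsupp.single i (κ i) ∧
        y = ∑ j ∈ Finset.univ.filter (· < i), Finsupp.single j (ℓ i j)) x y := hxy
    clear hxy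
    induction hxy' with
    | of x y h =>
      obtain ⟨i, hx, hy⟩ := h
      subst hx; subst hy
      exact Submodule.subset_span ⟨i, rfl⟩
    | refl x => simp
    | symm _ ih => rw [← neg_sub]; exact neg_mem ih
    | trans _ _ ih1 ih2 => have := add_mem ih1 ih2; rwa [sub_add_sub_cancel] at this
    | add _ _ ih1 ih2 =>
      rw [toZf_add, toZf_add, add_sub_add_comm]
      exact add_mem ih1 ih2
  have Rz_apply : ∀ i j : Fin t,
      Rz i j = (if i = j then (κ i : ℤ) else 0) - (if j < i then (ℓ i j : ℤ) else 0) := by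
    intro i j
    simp only [hRz, Pi.sub_apply, toZf, Finsupp.single_apply, rhs_apply]
    split_ifs <;> simp
  -- injectivity on normal forms
  have inj : ∀ a b : Fin t →₀ ℕ, (∀ i, a i < κ i) → (∀ i, b i < κ i) →
      c.mk' a = c.mk' b → a = b := by
    intro a b ha hb h
    have hmem : toZf a - toZf b ∈ M := hcle a b (c.eq.mp h)
    rw [hM] at hmem
    obtain ⟨n, hn⟩ := (Submodule.mem_span_range_iff_exists_fun ℤ).mp hmem
    have main : ∀ k : ℕ, ∀ i : Fin t, t ≤ i.val + k → n i = 0 ∧ (a i : ℤ) = (b i : ℤ) := by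
      intro k
      induction k with
      | zero => intro i hik; have := i.isLt; omega
      | succ k IH =>
        intro i hik
        have hng : ∀ j : Fin t, i < j → n j = 0 := by
          intro j hj
          have hj' : i.val < j.val := hj
          exact (IH j (by omega)).1
        have hcoord := congrFun hn i
        rw [Finset.sum_apply] at hcoord
        have hterm : ∀ m : Fin t, m ∈ Finset.univ → m ≠ i → (n m • Rz m) i = 0 := by
          intro m _ hmi
          rcases lt_or_gt_of_ne hmi with hlt | hgt
          · rw [Pi.smul_apply, Rz_apply]
            have h1 : ¬ (m = i) := hmi
            have h2 : ¬ (i < m) := not_lt_of_gt hlt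
            simp [h1, h2]
          · rw [Pi.smul_apply, hng m hgt]; simp
        rw [Finset.sum_eq_single_of_mem i (Finset.mem_univ i) hterm] at hcoord
        have hRii : Rz i i = (κ i : ℤ) := by
          rw [Rz_apply]
          simp
        rw [Pi.smul_apply, hRii, smul_eq_mul] at hcoord
        have hsub : (toZf a - toZf b) i = (a i : ℤ) - (b i : ℤ) := by
          simp [toZf]
        rw [hsub] at hcoord
        have hai : (a i : ℤ) < κ i := by exact_mod_cast ha i
        have hbi : (b i : ℤ) < κ i := by exact_mod_cast hb i
        have hai0 : (0 : ℤ) ≤ a i := Int.natCast_nonneg _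
        have hbi0 : (0 : ℤ) ≤ b i := Int.natCast_nonneg _
        have hκi : (0 : ℤ) < κ i := by have := hκ i; exact_mod_cast (by omega : 0 < κ i)
        have hn0 : n i = 0 := by
          rcases lt_trichotomy (n i) 0 with hlt | heq | hgt
          · have h1 : n i ≤ -1 := by omega
            have h2 : n i * κ i ≤ -1 * κ i := mul_le_mul_of_nonneg_right h1 (le_of_lt hκi)
            omega
          · exact heq
          · have h1 : 1 ≤ n i := by omega
            have h2 : 1 * κ i ≤ n i * κ i := mul_le_mul_of_nonneg_right h1 (le_of_lt hκi)
            omega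
        refine ⟨hn0, ?_⟩
        rw [hn0] at hcoord
        omega
    ext i
    have := (main t i (by omega)).2
    exact_mod_cast this
  -- all together
  refine ⟨?_, order, ?_⟩
  · intro x
    obtain ⟨a, rfl⟩ := AddCon.mk'_surjective x
    have hN : 1 ≤ vv κ t := vv_pos κ hκ t
    refine ⟨c.mk' ((vv κ t - 1) • a), ?_⟩
    have h5 : a + (vv κ t - 1) • a = vv κ t • a := by
      rw [add_comm, ← succ_nsmul]
      congr 1
      omega
    rw [← map_add, h5, orderN]
  · set f : (∀ i : Fin t, Fin (κ i)) → c.Quotient :=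
      fun g => c.mk' (Finsupp.equivFunOnFinite.symm fun i => (g i : ℕ)) with hf
    have hfinj : Function.Injective f := by
      intro g1 g2 h
      have h2 := inj _ _ (fun i => by simp [Finsupp.equivFunOnFinite])
        (fun i => by simp [Finsupp.equivFunOnFinite]) h
      funext i
      have := congrFun (congrArg (fun (z : Fin t →₀ ℕ) => (z : Fin t → ℕ)) h2) i
      simp [Finsupp.equivFunOnFinite] at this
      exact Fin.ext this
    have hfsurj : Function.Surjective f := by
      intro x
      obtain ⟨a, rfl⟩ := AddCon.mk'_surjective x
      obtain ⟨b, hb1, hb2⟩ := reduce (mu κ a) a le_rfl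
      refine ⟨fun i => ⟨b i, hb1 i⟩, ?_⟩
      show c.mk' (Finsupp.equivFunOnFinite.symm fun i => b i) = c.mk' a
      rw [show (fun i => b i) = ⇑b from rfl, Finsupp.equivFunOnFinite_symm_coe]
      exact hb2
    rw [← Nat.card_eq_of_bijective f ⟨hfinj, hfsurj⟩]
    simp [Nat.card_eq_fintype_card]
end

section
/- Let G be a finite abelian group with generators satisfying the relations a₁^{k₁} = e and a_i^{k_i} = a₁^{λ_{i,1}}⋯a_{i−1}^{λ_{i,i−1}} for i = 2,...,t, and suppose the map (j₁,...,j_t) ↦ a₁^{j₁}⋯a_t^{j_t} agrees on the box ∏_i{0,...,k_i−1} with the canonical normal form. Then for ALL natural numbers ℓ₁,...,ℓ_t (not only those in the box), the normal form of x₁^{ℓ₁}⋯x_t^{ℓ_t} in Γ(K,L) maps under Ψ to a₁^{ℓ₁}⋯a_t^{ℓ_t}; i.e., reduction by the relations commutes with evaluation in G. -/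
theorem stmt18 {G : Type*} [CommGroup G] (t : ℕ) (a : Fin t → G)
    (k : Fin t → ℕ) (hk2 : ∀ i, 2 ≤ k i)
    (lam : Fin t → Fin t → ℕ) (hlam : ∀ i j, j < i → lam i j ≤ k j - 1)
    (hrel : ∀ i, a i ^ k i = ∏ j ∈ Finset.univ.filter (· < i), a j ^ lam i j) :
    ∀ c : AddCon (Fin t →₀ ℕ),
      c = addConGen (fun x y => ∃ i : Fin t,
        x = Finsupp.single i (k i) ∧
        y = ∑ j ∈ Finset.univ.filter (· < i), Finsupp.single j (lam i j)) →
      ∀ Ψ : c.Quotient → G,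
        (∀ j : (i : Fin t) → Fin (k i),
          Ψ (c.mk' (∑ i, Finsupp.single i (j i : ℕ))) = ∏ i, a i ^ (j i : ℕ)) →
        ∀ l : Fin t → ℕ,
          Ψ (c.mk' (∑ i, Finsupp.single i (l i))) = ∏ i, a i ^ l i := by
  intro c hc Ψ hΨ
  -- the basic relations hold in c
  have hbase : ∀ i : Fin t, c (Finsupp.single i (k i))
      (∑ j ∈ Finset.univ.filter (· < i), Finsupp.single j (lam i j)) := by
    intro i
    rw [hc]
    exact AddConGen.Rel.of _ _ ⟨i, rfl, rfl⟩
  -- weight base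
  set B : ℕ := 1 + ∑ p, ∑ q, lam p q with hB
  have hB1 : 1 ≤ B := Nat.le_add_right 1 _
  -- strong induction on the weighted measure
  suffices H : ∀ n : ℕ, ∀ l : Fin t → ℕ, (∑ j, l j * B ^ (j : ℕ)) = n →
      Ψ (c.mk' (∑ i, Finsupp.single i (l i))) = ∏ i, a i ^ l i by
    intro l; exact H _ l rfl
  intro n
  induction n using Nat.strong_induction_on with
  | _ n ih =>
    intro l hl
    by_cases hcase : ∀ i, l i < k i
    · have := hΨ (fun i => ⟨l i, hcase i⟩)
      simpa using this
    · push_neg at hcase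
      obtain ⟨i, hi⟩ := hcase
      -- l'' : subtract k i at coordinate i
      set l'' : Fin t → ℕ := fun j => if j = i then l i - k i else l j with hl''
      set l' : Fin t → ℕ := fun j => l'' j + if j < i then lam i j else 0 with hl'
      -- decomposition of the finsupp sums
      have hd1 : (∑ j, Finsupp.single j (l j)) =
          (∑ j, Finsupp.single j (l'' j)) + Finsupp.single i (k i) := by
        ext m
        simp only [Finsupp.finset_sum_apply, Finsupp.add_apply, Finsupp.single_apply,
          hl'']
        rcases eq_or_ne m i with rfl | hmi
        · simp [Finset.sum_ite_eq, Nat.sub_add_cancel hi]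
        · simp [Finset.sum_ite_eq, hmi, Ne.symm hmi]
      have hd2 : (∑ j, Finsupp.single j (l' j)) =
          (∑ j, Finsupp.single j (l'' j)) +
            ∑ j ∈ Finset.univ.filter (· < i), Finsupp.single j (lam i j) := by
        ext m
        simp only [Finsupp.finset_sum_apply, Finsupp.add_apply, Finsupp.single_apply,
          hl', hl'']
        rcases lt_or_ge m i with hmi | hmi
        · simp [Finset.sum_ite_eq, hmi, Finset.sum_filter]
        · simp [Finset.sum_ite_eq, not_lt.mpr hmi, Finset.sum_filter]
      -- equality in the quotient
      have hq : c.mk' (∑ j, Finsupp.single j (l j)) = c.mk' (∑ j, Finsupp.single j (l' j)) := by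
        rw [hd1, hd2, map_add, map_add]
        congr 1
        exact (AddCon.eq c).mpr (hbase i)
      -- equality of the products
      have hp : (∏ j, a j ^ l j) = ∏ j, a j ^ l' j := by
        have e1 : (∏ j, a j ^ l j) = (∏ j, a j ^ l'' j) * a i ^ k i := by
          have : ∀ j : Fin t, a j ^ l j = a j ^ l'' j * a j ^ (if j = i then k i else 0) := by
            intro j
            rw [← pow_add, hl'']
            rcases eq_or_ne j i with rfl | hji
            · simp [Nat.sub_add_cancel hi]
            · simp [hji]
          rw [Finset.prod_congr rfl fun j _ => this j, Finset.prod_mul_distrib]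
          congr 1
          simp [Finset.prod_ite_eq']
        have e2 : (∏ j, a j ^ l' j) = (∏ j, a j ^ l'' j) *
            ∏ j ∈ Finset.univ.filter (· < i), a j ^ lam i j := by
          simp only [hl', pow_add]
          rw [Finset.prod_mul_distrib]
          congr 1
          rw [Finset.prod_filter]
          exact Finset.prod_congr rfl fun j _ => by split <;> simp
        rw [e1, e2, hrel i]
      -- the measure decreases
      have hm : (∑ j, l' j * B ^ (j : ℕ)) < n := by
        rw [← hl]
        have m1 : (∑ j, l j * B ^ (j : ℕ)) =
            (∑ j, l'' j * B ^ (j : ℕ)) + k i * B ^ (i : ℕ) := by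
          have hpt : ∀ j : Fin t, l j * B ^ (j : ℕ) =
              l'' j * B ^ (j : ℕ) + (if j = i then k i * B ^ (i : ℕ) else 0) := by
            intro j
            rcases eq_or_ne j i with rfl | hji
            · simp [hl'', ← add_mul, Nat.sub_add_cancel hi]
            · simp [hl'', hji]
          rw [Finset.sum_congr rfl fun j _ => hpt j, Finset.sum_add_distrib,
            Finset.sum_ite_eq' Finset.univ i, if_pos (Finset.mem_univ i)]
        have m2 : (∑ j, l' j * B ^ (j : ℕ)) =
            (∑ j, l'' j * B ^ (j : ℕ)) +
              ∑ j ∈ Finset.univ.filter (· < i), lam i j * B ^ (j : ℕ) := by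
          simp only [hl', add_mul, Finset.sum_add_distrib]
          congr 1
          rw [Finset.sum_filter]
          exact Finset.sum_congr rfl fun j _ => by split <;> simp
        rw [m1, m2]
        have key : (∑ j ∈ Finset.univ.filter (· < i), lam i j * B ^ (j : ℕ)) <
            k i * B ^ (i : ℕ) := by
          have hBpos : 0 < B := hB1
          refine Nat.lt_of_mul_lt_mul_left (a := B) ?_
          have step1 : B * (∑ j ∈ Finset.univ.filter (· < i), lam i j * B ^ (j : ℕ)) =
              ∑ j ∈ Finset.univ.filter (· < i), lam i j * B ^ ((j : ℕ) + 1) := by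
            rw [Finset.mul_sum]
            exact Finset.sum_congr rfl fun j _ => by ring
          have step2 : (∑ j ∈ Finset.univ.filter (· < i), lam i j * B ^ ((j : ℕ) + 1)) ≤
              (∑ j ∈ Finset.univ.filter (· < i), lam i j) * B ^ (i : ℕ) := by
            rw [Finset.sum_mul]
            refine Finset.sum_le_sum fun j hj => ?_
            refine Nat.mul_le_mul_left _ (Nat.pow_le_pow_right hBpos ?_)
            simp only [Finset.mem_filter] at hj
            exact hj.2
          have step3 : (∑ j ∈ Finset.univ.filter (· < i), lam i j) ≤ B - 1 := by
            have : (∑ j ∈ Finset.univ.filter (· < i), lam i j) ≤ ∑ q, lam i q :=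
              Finset.sum_le_sum_of_subset (Finset.filter_subset _ _)
            have h2 : (∑ q, lam i q) ≤ ∑ p, ∑ q, lam p q :=
              Finset.single_le_sum (f := fun p => ∑ q, lam p q)
                (fun p _ => Nat.zero_le _) (Finset.mem_univ i)
            omega
          have step4 : (B - 1) * B ^ (i : ℕ) < B * B ^ (i : ℕ) :=
            (Nat.mul_lt_mul_right (Nat.pow_pos (n := (i : ℕ)) hBpos)).mpr (by omega)
          have step5 : B * B ^ (i : ℕ) ≤ B * (k i * B ^ (i : ℕ)) := by
            have : 1 * B ^ (i : ℕ) ≤ k i * B ^ (i : ℕ) :=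
              Nat.mul_le_mul_right _ (le_trans (by norm_num) (hk2 i))
            calc B * B ^ (i : ℕ) = B * (1 * B ^ (i : ℕ)) := by ring
              _ ≤ B * (k i * B ^ (i : ℕ)) := Nat.mul_le_mul_left _ this
          calc B * (∑ j ∈ Finset.univ.filter (· < i), lam i j * B ^ (j : ℕ))
              = ∑ j ∈ Finset.univ.filter (· < i), lam i j * B ^ ((j : ℕ) + 1) := step1
            _ ≤ (∑ j ∈ Finset.univ.filter (· < i), lam i j) * B ^ (i : ℕ) := step2
            _ ≤ (B - 1) * B ^ (i : ℕ) := Nat.mul_le_mul_right _ step3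
            _ < B * B ^ (i : ℕ) := step4
            _ ≤ B * (k i * B ^ (i : ℕ)) := step5
        omega
      rw [hq, hp]
      exact ih _ hm l' rfl
end
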